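/- arXiv:2312.01469 — 9 statements merged into one kernel-verified Lean document; each statement's English description precedes it below -/
import Mathlib

section
/- Let V, a, ā, b, b̄, c, c̄ ∈ 𝔤 and μ₁, μ₂, μ₃ ∈ ℝ satisfy [V,a] = μ₁·ā, [V,ā] = −μ₁·a, [V,b] = μ₂·b̄, [V,b̄] = −μ₂·b, [V,c] = μ₃·c̄ and [V,c̄] = −μ₃·c. Then μ₃·Q([ā,b],c̄) + μ₂·Q([ā,b̄],c) − μ₁·Q([a,b],c) = 0 and μ₃·Q([a,b̄],c̄) + μ₁·Q([ā,b̄],c) − μ₂·Q([a,b],c) = 0. -/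
/-- Jacobi-identity relations between structure constants of a
normalizer-adapted decomposition. -/
theorem jacobi_structure_constant_relations
    (𝔤 : Type*) [LieRing 𝔤] [LieAlgebra ℝ 𝔤]
    (Q : 𝔤 →ₗ[ℝ] 𝔤 →ₗ[ℝ] ℝ)
    (hsymm : ∀ x y : 𝔤, Q x y = Q y x)
    (hinv : ∀ x y z : 𝔤, Q ⁅z, x⁆ y + Q x ⁅z, y⁆ = 0)
    (V a a' b b' c c' : 𝔤) (μ₁ μ₂ μ₃ : ℝ)
    (ha : ⁅V, a⁆ = μ₁ • a') (ha' : ⁅V, a'⁆ = (-μ₁) • a)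
    (hb : ⁅V, b⁆ = μ₂ • b') (hb' : ⁅V, b'⁆ = (-μ₂) • b)
    (hc : ⁅V, c⁆ = μ₃ • c') (hc' : ⁅V, c'⁆ = (-μ₃) • c) :
    μ₃ * Q ⁅a', b⁆ c' + μ₂ * Q ⁅a', b'⁆ c - μ₁ * Q ⁅a, b⁆ c = 0 ∧
    μ₃ * Q ⁅a, b'⁆ c' + μ₁ * Q ⁅a', b'⁆ c - μ₂ * Q ⁅a, b⁆ c = 0 := by
  have h1 := hinv ⁅a', b⁆ c V
  have h2 := hinv ⁅a, b'⁆ c V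
  rw [leibniz_lie V a' b, ha', hb, hc, smul_lie, lie_smul] at h1
  rw [leibniz_lie V a b', ha, hb', hc, smul_lie, lie_smul] at h2
  simp only [map_add, map_smul, LinearMap.add_apply, LinearMap.smul_apply,
    smul_eq_mul] at h1 h2
  constructor <;> linarith
end

section
/- Let a, b, c ∈ ℝ with a > 0, b ≥ 0, c ≥ 0, and let (w, x, y, z) ∈ ℝ⁴ satisfy the six linear equations: a·w + (b−c)·x − a·y − (b−c)·z = 0; b·w − b·x + (a−c)·y − (a−c)·z = 0; c·w − (a−b)·x + (a−b)·y − c·z = 0; (a−b)·w − c·x + c·y − (a−b)·z = 0; (b−c)·w + a·x − (b−c)·y − a·z = 0; (a−c)·w − (a−c)·x + b·y − b·z = 0. Then: if b = 0 and c = a, we have w = x and y = z; if c = 0 and b = a, we have w = z and x = y; in all other cases w = x = y = z. -/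
/-- the linear-algebra core of the structure-constant lemma for
normalizer-adapted decompositions. -/
theorem structure_constant_linear_system
    (a b c w x y z : ℝ) (ha : 0 < a) (hb : 0 ≤ b) (hc : 0 ≤ c)
    (h1 : a * w + (b - c) * x - a * y - (b - c) * z = 0)
    (h2 : b * w - b * x + (a - c) * y - (a - c) * z = 0)
    (h3 : c * w - (a - b) * x + (a - b) * y - c * z = 0)
    (h4 : (a - b) * w - c * x + c * y - (a - b) * z = 0)
    (h5 : (b - c) * w + a * x - (b - c) * y - a * z = 0)
    (h6 : (a - c) * w - (a - c) * x + b * y - b * z = 0) :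
    (b = 0 ∧ c = a → w = x ∧ y = z) ∧
    (c = 0 ∧ b = a → w = z ∧ x = y) ∧
    (¬(b = 0 ∧ c = a) → ¬(c = 0 ∧ b = a) → w = x ∧ x = y ∧ y = z) := by
  have hv : 2 * a * (w - x + y - z) = 0 := by linear_combination h2 + h3 + h4 + h6
  have hbu : 2 * b * (w + x - y - z) = 0 := by linear_combination h1 + h5 + h3 - h4
  have hacu : 2 * (a - c) * (w + x - y - z) = 0 := by linear_combination h1 + h5 - h3 + h4
  have hct : 2 * c * (w - x - y + z) = 0 := by linear_combination h1 - h5 + h2 - h6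
  have habt : 2 * (a - b) * (w - x - y + z) = 0 := by linear_combination h1 - h5 - h2 + h6
  have hv0 : w - x + y - z = 0 := by
    have := mul_eq_zero.mp hv
    rcases this with h | h
    · nlinarith
    · exact h
  refine ⟨?_, ?_, ?_⟩
  · rintro ⟨hb0, hca⟩
    subst hb0; subst hca
    have ht0 : w - x - y + z = 0 := by
      rcases mul_eq_zero.mp hct with h | h
      · nlinarith
      · exact h
    constructor <;> linarith
  · rintro ⟨hc0, hba⟩
    subst hc0; subst hba
    have hu0 : w + x - y - z = 0 := by
      rcases mul_eq_zero.mp hbu with h | h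
      · nlinarith
      · exact h
    constructor <;> linarith
  · intro hA hB
    have hu0 : w + x - y - z = 0 := by
      by_cases hb0 : b = 0
      · have hca : c ≠ a := fun h => hA ⟨hb0, h⟩
        rcases mul_eq_zero.mp hacu with h | h
        · exfalso; apply hca; nlinarith
        · exact h
      · rcases mul_eq_zero.mp hbu with h | h
        · exfalso; apply hb0; nlinarith
        · exact h
    have ht0 : w - x - y + z = 0 := by
      by_cases hc0 : c = 0
      · have hba : b ≠ a := fun h => hB ⟨hc0, h⟩
        rcases mul_eq_zero.mp habt with h | h
        · exfalso; apply hba; nlinarith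
        · exact h
      · rcases mul_eq_zero.mp hct with h | h
        · exfalso; apply hc0; nlinarith
        · exact h
    refine ⟨by linarith, by linarith, by linarith⟩
end

section
/- If μ₁ ≠ 0 and μ₂ ≠ 0, then [ē f̄ h] = [e f h], i.e. Σ_{α,β,γ} Q([ē_α, f̄_β], h_γ)² = Σ_{α,β,γ} Q([e_α, f_β], h_γ)². -/
/-- Pointwise linear-algebra key lemma. -/
lemma bar_bar_key (μ₁ μ₂ μ₃ a b' c' d : ℝ) (hμ₁ : μ₁ ≠ 0) (hμ₂ : μ₂ ≠ 0)
    (E2 : μ₁ * b' + μ₂ * c' - μ₃ * a = 0)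
    (E3 : -μ₁ * a + μ₂ * d + μ₃ * b' = 0)
    (E5 : μ₁ * d - μ₂ * a + μ₃ * c' = 0)
    (E8 : μ₁ * c' + μ₂ * b' + μ₃ * d = 0) :
    d ^ 2 = a ^ 2 := by
  have key : 2 * μ₁ * μ₂ * (d ^ 2 - a ^ 2) = 0 := by
    linear_combination (μ₁ * d + μ₂ * a) * E3 + (μ₁ * a + μ₂ * d) * E5 +
      (μ₁ * c' + μ₂ * b') * E2 + (-μ₁ * b' - μ₂ * c') * E8
  have h2 : (2 : ℝ) * μ₁ * μ₂ ≠ 0 := by positivity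
  have := mul_eq_zero.mp key
  rcases this with h' | h'
  · exact absurd h' h2
  · linarith [h']

/-- The basic invariance identity. -/
lemma inv_identity {𝔤 : Type*} [LieRing 𝔤] [LieAlgebra ℝ 𝔤]
    (Q : 𝔤 →ₗ[ℝ] 𝔤 →ₗ[ℝ] ℝ)
    (hinv : ∀ x y z : 𝔤, Q ⁅z, x⁆ y + Q x ⁅z, y⁆ = 0)
    (V x y w xb yb wb : 𝔤) (μx μy μw : ℝ)
    (hx : ⁅V, x⁆ = μx • xb) (hy : ⁅V, y⁆ = μy • yb) (hw : ⁅V, w⁆ = μw • wb) :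
    μx * Q ⁅xb, y⁆ w + μy * Q ⁅x, yb⁆ w + μw * Q ⁅x, y⁆ wb = 0 := by
  have h0 := hinv ⁅x, y⁆ w V
  rw [leibniz_lie, hx, hy, hw, smul_lie, lie_smul] at h0
  simp only [map_add, map_smul, LinearMap.add_apply, LinearMap.smul_apply,
    smul_eq_mul] at h0
  linarith

/-- `[φ_p(i) φ_p(j) k] = [ijk]` when both rotation speeds `μ₁, μ₂`
are nonzero. -/
theorem structure_constants_bar_bar_eq
    (𝔤 : Type*) [LieRing 𝔤] [LieAlgebra ℝ 𝔤]
    (Q : 𝔤 →ₗ[ℝ] 𝔤 →ₗ[ℝ] ℝ)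
    (hsymm : ∀ x y : 𝔤, Q x y = Q y x)
    (hinv : ∀ x y z : 𝔤, Q ⁅z, x⁆ y + Q x ⁅z, y⁆ = 0)
    (A B C : Type*) [Fintype A] [Fintype B] [Fintype C]
    (e eb : A → 𝔤) (f fb : B → 𝔤) (h hb : C → 𝔤)
    (V : 𝔤) (μ₁ μ₂ μ₃ : ℝ)
    (he : ∀ α, ⁅V, e α⁆ = μ₁ • eb α) (heb : ∀ α, ⁅V, eb α⁆ = (-μ₁) • e α)
    (hf : ∀ β, ⁅V, f β⁆ = μ₂ • fb β) (hfb : ∀ β, ⁅V, fb β⁆ = (-μ₂) • f β)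
    (hh : ∀ γ, ⁅V, h γ⁆ = μ₃ • hb γ) (hhb : ∀ γ, ⁅V, hb γ⁆ = (-μ₃) • h γ)
    (hμ₁ : μ₁ ≠ 0) (hμ₂ : μ₂ ≠ 0) :
    ∑ α, ∑ β, ∑ γ, (Q ⁅eb α, fb β⁆ (h γ)) ^ 2 =
      ∑ α, ∑ β, ∑ γ, (Q ⁅e α, f β⁆ (h γ)) ^ 2 := by
  refine Finset.sum_congr rfl fun α _ => Finset.sum_congr rfl fun β _ =>
    Finset.sum_congr rfl fun γ _ => ?_
  have E2 := inv_identity Q hinv V (e α) (f β) (hb γ) (eb α) (fb β) (h γ)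
    μ₁ μ₂ (-μ₃) (he α) (hf β) (hhb γ)
  have E3 := inv_identity Q hinv V (eb α) (f β) (h γ) (e α) (fb β) (hb γ)
    (-μ₁) μ₂ μ₃ (heb α) (hf β) (hh γ)
  have E5 := inv_identity Q hinv V (e α) (fb β) (h γ) (eb α) (f β) (hb γ)
    μ₁ (-μ₂) μ₃ (he α) (hfb β) (hh γ)
  have E8 := inv_identity Q hinv V (eb α) (fb β) (hb γ) (e α) (f β) (h γ)
    (-μ₁) (-μ₂) (-μ₃) (heb α) (hfb β) (hhb γ)
  exact bar_bar_key μ₁ μ₂ μ₃ (Q ⁅e α, f β⁆ (h γ)) (Q ⁅eb α, f β⁆ (hb γ))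
    (Q ⁅e α, fb β⁆ (hb γ)) (Q ⁅eb α, fb β⁆ (h γ)) hμ₁ hμ₂
    (by linarith) (by linarith) (by linarith) (by linarith)
end

section
/- If μ₁ ≠ 0 and μ₂ = μ₃ = 0 (so [V, f_β] = 0 and [V, h_γ] = 0 for all β, γ), then [ē f h] = [e f h], i.e. Σ_{α,β,γ} Q([ē_α, f_β], h_γ)² = Σ_{α,β,γ} Q([e_α, f_β], h_γ)². -/
/-- `[φ_p(i) j k] = [ijk]` when `j, k` lie in the index set on which
`ad(V_p)` acts trivially. -/
theorem structure_constants_bar_fixed_eq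
    (𝔤 : Type*) [LieRing 𝔤] [LieAlgebra ℝ 𝔤]
    (Q : 𝔤 →ₗ[ℝ] 𝔤 →ₗ[ℝ] ℝ)
    (hsymm : ∀ x y : 𝔤, Q x y = Q y x)
    (hinv : ∀ x y z : 𝔤, Q ⁅z, x⁆ y + Q x ⁅z, y⁆ = 0)
    (A B C : Type*) [Fintype A] [Fintype B] [Fintype C]
    (e eb : A → 𝔤) (f fb : B → 𝔤) (h hb : C → 𝔤)
    (V : 𝔤) (μ₁ μ₂ μ₃ : ℝ)
    (he : ∀ α, ⁅V, e α⁆ = μ₁ • eb α) (heb : ∀ α, ⁅V, eb α⁆ = (-μ₁) • e α)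
    (hf : ∀ β, ⁅V, f β⁆ = μ₂ • fb β) (hfb : ∀ β, ⁅V, fb β⁆ = (-μ₂) • f β)
    (hh : ∀ γ, ⁅V, h γ⁆ = μ₃ • hb γ) (hhb : ∀ γ, ⁅V, hb γ⁆ = (-μ₃) • h γ)
    (hμ₁ : μ₁ ≠ 0) (hμ₂ : μ₂ = 0) (hμ₃ : μ₃ = 0)
    (hf0 : ∀ β, ⁅V, f β⁆ = 0) (hh0 : ∀ γ, ⁅V, h γ⁆ = 0) :
    ∑ α, ∑ β, ∑ γ, (Q ⁅eb α, f β⁆ (h γ)) ^ 2 =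
      ∑ α, ∑ β, ∑ γ, (Q ⁅e α, f β⁆ (h γ)) ^ 2 := by
  -- key: Q ⁅V, x⁆ y = - Q x ⁅V, y⁆
  have key : ∀ x y : 𝔤, Q ⁅V, x⁆ y = - Q x ⁅V, y⁆ := by
    intro x y
    have := hinv x y V
    linarith
  have hVh : ∀ (x : 𝔤) (γ : C), Q ⁅V, x⁆ (h γ) = 0 := by
    intro x γ
    rw [key, hh0]
    simp
  -- Q ⁅e α, f β⁆ (h γ) = 0
  have hQe : ∀ α β γ, Q ⁅e α, f β⁆ (h γ) = 0 := by
    intro α β γ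
    have hJ : ⁅V, ⁅eb α, f β⁆⁆ = (-μ₁) • ⁅e α, f β⁆ := by
      rw [leibniz_lie, heb α, hf0 β, lie_zero, add_zero, smul_lie]
    have := hVh ⁅eb α, f β⁆ γ
    rw [hJ] at this
    simp only [map_smul, LinearMap.smul_apply, smul_eq_mul, neg_mul] at this
    rcases mul_eq_zero.mp (neg_eq_zero.mp this) with h1 | h1
    · exact absurd h1 hμ₁
    · exact h1
  -- Q ⁅eb α, f β⁆ (h γ) = 0
  have hQeb : ∀ α β γ, Q ⁅eb α, f β⁆ (h γ) = 0 := by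
    intro α β γ
    have hJ : ⁅V, ⁅e α, f β⁆⁆ = μ₁ • ⁅eb α, f β⁆ := by
      rw [leibniz_lie, he α, hf0 β, lie_zero, add_zero, smul_lie]
    have := hVh ⁅e α, f β⁆ γ
    rw [hJ] at this
    simp only [map_smul, LinearMap.smul_apply, smul_eq_mul] at this
    rcases mul_eq_zero.mp this with h1 | h1
    · exact absurd h1 hμ₁
    · exact h1
  simp [hQe, hQeb]
end

section
/- For arbitrary μ₁, μ₂, μ₃ ∈ ℝ, the following identity holds: μ₃²·[ē f h̄] − μ₂²·[ē f̄ h] − μ₁²·[e f h] = μ₃²·[e f̄ h̄] − μ₁²·[ē f̄ h] − μ₂²·[e f h]. -/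
/-- the squared-Jacobi identity relating barred and unbarred
structure constants of a normalizer-adapted decomposition. -/
theorem squared_jacobi_identity
    (𝔤 : Type*) [LieRing 𝔤] [LieAlgebra ℝ 𝔤]
    (Q : 𝔤 →ₗ[ℝ] 𝔤 →ₗ[ℝ] ℝ)
    (hsymm : ∀ x y : 𝔤, Q x y = Q y x)
    (hinv : ∀ x y z : 𝔤, Q ⁅z, x⁆ y + Q x ⁅z, y⁆ = 0)
    (A B C : Type*) [Fintype A] [Fintype B] [Fintype C]
    (e eb : A → 𝔤) (f fb : B → 𝔤) (h hb : C → 𝔤)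
    (V : 𝔤) (μ₁ μ₂ μ₃ : ℝ)
    (he : ∀ α, ⁅V, e α⁆ = μ₁ • eb α) (heb : ∀ α, ⁅V, eb α⁆ = (-μ₁) • e α)
    (hf : ∀ β, ⁅V, f β⁆ = μ₂ • fb β) (hfb : ∀ β, ⁅V, fb β⁆ = (-μ₂) • f β)
    (hh : ∀ γ, ⁅V, h γ⁆ = μ₃ • hb γ) (hhb : ∀ γ, ⁅V, hb γ⁆ = (-μ₃) • h γ) :
    μ₃ ^ 2 * (∑ α, ∑ β, ∑ γ, (Q ⁅eb α, f β⁆ (hb γ)) ^ 2)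
      - μ₂ ^ 2 * (∑ α, ∑ β, ∑ γ, (Q ⁅eb α, fb β⁆ (h γ)) ^ 2)
      - μ₁ ^ 2 * (∑ α, ∑ β, ∑ γ, (Q ⁅e α, f β⁆ (h γ)) ^ 2) =
    μ₃ ^ 2 * (∑ α, ∑ β, ∑ γ, (Q ⁅e α, fb β⁆ (hb γ)) ^ 2)
      - μ₁ ^ 2 * (∑ α, ∑ β, ∑ γ, (Q ⁅eb α, fb β⁆ (h γ)) ^ 2)
      - μ₂ ^ 2 * (∑ α, ∑ β, ∑ γ, (Q ⁅e α, f β⁆ (h γ)) ^ 2) := by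
  have key : ∀ (α : A) (β : B) (γ : C),
      μ₃ ^ 2 * (Q ⁅eb α, f β⁆ (hb γ)) ^ 2
        - μ₂ ^ 2 * (Q ⁅eb α, fb β⁆ (h γ)) ^ 2
        - μ₁ ^ 2 * (Q ⁅e α, f β⁆ (h γ)) ^ 2 =
      μ₃ ^ 2 * (Q ⁅e α, fb β⁆ (hb γ)) ^ 2
        - μ₁ ^ 2 * (Q ⁅eb α, fb β⁆ (h γ)) ^ 2
        - μ₂ ^ 2 * (Q ⁅e α, f β⁆ (h γ)) ^ 2 := by
    intro α β γ
    have r4 := hinv ⁅eb α, f β⁆ (h γ) V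
    have r3 := hinv ⁅e α, fb β⁆ (h γ) V
    rw [leibniz_lie V (eb α) (f β)] at r4
    rw [leibniz_lie V (e α) (fb β)] at r3
    rw [heb, hf, hh] at r4
    rw [he, hfb, hh] at r3
    simp only [neg_lie, lie_neg, smul_lie, lie_smul, map_add, map_smul, LinearMap.add_apply,
      LinearMap.smul_apply, smul_eq_mul, neg_smul, map_neg, LinearMap.neg_apply] at r4 r3
    set a := Q ⁅e α, f β⁆ (h γ) with ha
    set b := Q ⁅eb α, fb β⁆ (h γ) with hb'
    set c := Q ⁅eb α, f β⁆ (hb γ) with hc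
    set d := Q ⁅e α, fb β⁆ (hb γ) with hd
    have h1 : μ₃ * c = μ₁ * a - μ₂ * b := by linarith
    have h2 : μ₃ * d = μ₂ * a - μ₁ * b := by linarith
    linear_combination (μ₃ * c + μ₁ * a - μ₂ * b) * h1 - (μ₃ * d + μ₂ * a - μ₁ * b) * h2
  simp only [Finset.mul_sum, ← Finset.sum_sub_distrib]
  exact Finset.sum_congr rfl fun α _ => Finset.sum_congr rfl fun β _ =>
    Finset.sum_congr rfl fun γ _ => key α β γ
end

section
/- Fix indices i and j. Suppose there exists an index j₀ such that span{[V,X] : X ∈ m_i} ∩ m_{j₀} ≠ {0}, and suppose there exist X ∈ m_i and Y ∈ m_j with Q([V,X], Y) ≠ 0. Then span{[V,X] : X ∈ m_i} = m_j, and consequently Q([V,X'], Z) = 0 for every X' ∈ m_i and every Z ∈ m_k with k ≠ j. -/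
/-- uniqueness of the target module of `ad(V)` in a
normalizer-adapted decomposition. -/
theorem ad_image_unique_target
    (𝔤 : Type*) [LieRing 𝔤] [LieAlgebra ℝ 𝔤] [FiniteDimensional ℝ 𝔤]
    (Q : 𝔤 →ₗ[ℝ] 𝔤 →ₗ[ℝ] ℝ)
    (hQsymm : ∀ x y : 𝔤, Q x y = Q y x)
    (hQpos : ∀ x : 𝔤, x ≠ 0 → 0 < Q x x)
    (𝔥 : LieSubalgebra ℝ 𝔤)
    (ℓ : ℕ) (m : Fin ℓ → Submodule ℝ 𝔤)
    (hne : ∀ k, m k ≠ ⊥)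
    (horth : ∀ k k', k ≠ k' → ∀ x ∈ m k, ∀ y ∈ m k', Q x y = 0)
    (hinvar : ∀ k, ∀ H ∈ 𝔥, ∀ x ∈ m k, ⁅H, x⁆ ∈ m k)
    (hirr : ∀ k, ∀ U : Submodule ℝ 𝔤, U ≤ m k →
      (∀ H ∈ 𝔥, ∀ u ∈ U, ⁅H, u⁆ ∈ U) → U = ⊥ ∨ U = m k)
    (V : 𝔤) (hV : ∀ H ∈ 𝔥, ⁅H, V⁆ = 0)
    (i j : Fin ℓ)
    (hj₀ : ∃ j₀ : Fin ℓ,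
      Submodule.span ℝ {w : 𝔤 | ∃ x ∈ m i, w = ⁅V, x⁆} ⊓ m j₀ ≠ ⊥)
    (hij : ∃ X ∈ m i, ∃ Y ∈ m j, Q ⁅V, X⁆ Y ≠ 0) :
    Submodule.span ℝ {w : 𝔤 | ∃ x ∈ m i, w = ⁅V, x⁆} = m j ∧
    ∀ X' ∈ m i, ∀ k : Fin ℓ, k ≠ j → ∀ Z ∈ m k, Q ⁅V, X'⁆ Z = 0 := by
  classical
  obtain ⟨j₀, hj₀⟩ := hj₀
  obtain ⟨X, hX, Y, hY, hQXY⟩ := hij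
  set φ : 𝔤 →ₗ[ℝ] 𝔤 := (LieAlgebra.ad ℝ 𝔤 V) with hφ
  have hφapply : ∀ x : 𝔤, φ x = ⁅V, x⁆ := fun x => rfl
  have hset : {w : 𝔤 | ∃ x ∈ m i, w = ⁅V, x⁆} = φ '' (m i) := by
    ext w
    constructor
    · rintro ⟨x, hx, rfl⟩; exact ⟨x, hx, rfl⟩
    · rintro ⟨x, hx, rfl⟩; exact ⟨x, hx, rfl⟩
  have hW : Submodule.span ℝ {w : 𝔤 | ∃ x ∈ m i, w = ⁅V, x⁆}
      = Submodule.map φ (m i) := by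
    rw [hset, ← Submodule.map_span, Submodule.span_eq]
  set W : Submodule ℝ 𝔤 := Submodule.map φ (m i) with hWdef
  -- commutation of φ with the 𝔥-action
  have hcomm : ∀ H ∈ 𝔥, ∀ x : 𝔤, ⁅H, φ x⁆ = φ ⁅H, x⁆ := by
    intro H hH x
    rw [hφapply, hφapply, leibniz_lie, hV H hH, zero_lie, zero_add]
  -- W is 𝔥-invariant
  have hWinv : ∀ H ∈ 𝔥, ∀ w ∈ W, ⁅H, w⁆ ∈ W := by
    rintro H hH w ⟨x, hx, rfl⟩
    rw [hcomm H hH]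
    exact ⟨⁅H, x⁆, hinvar i H hH x hx, rfl⟩
  -- W is 𝔥-irreducible (or ⊥)
  have hWirr : ∀ U : Submodule ℝ 𝔤, U ≤ W →
      (∀ H ∈ 𝔥, ∀ u ∈ U, ⁅H, u⁆ ∈ U) → U = ⊥ ∨ U = W := by
    intro U hUW hUinv
    set U' : Submodule ℝ 𝔤 := m i ⊓ Submodule.comap φ U with hU'def
    have hU'inv : ∀ H ∈ 𝔥, ∀ u ∈ U', ⁅H, u⁆ ∈ U' := by
      rintro H hH x ⟨hx1, hx2⟩
      refine ⟨hinvar i H hH x hx1, ?_⟩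
      show φ ⁅H, x⁆ ∈ U
      rw [← hcomm H hH]
      exact hUinv H hH (φ x) hx2
    rcases hirr i U' inf_le_left hU'inv with h | h
    · left
      rw [Submodule.eq_bot_iff]
      intro u hu
      obtain ⟨x, hx, rfl⟩ := hUW hu
      have : x ∈ U' := ⟨hx, hu⟩
      rw [h] at this
      have hx0 : x = 0 := by simpa using this
      simp [hx0]
    · right
      refine le_antisymm hUW ?_
      rintro w ⟨x, hx, rfl⟩
      have : x ∈ U' := h ▸ hx
      exact this.2
  -- W = m j₀
  have hUne : W ⊓ m j₀ ≠ ⊥ := by rwa [hW] at hj₀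
  have hUinv : ∀ H ∈ 𝔥, ∀ u ∈ W ⊓ m j₀, ⁅H, u⁆ ∈ W ⊓ m j₀ := by
    rintro H hH u ⟨h1, h2⟩
    exact ⟨hWinv H hH u h1, hinvar j₀ H hH u h2⟩
  have h1 : W ⊓ m j₀ = W := by
    rcases hWirr (W ⊓ m j₀) inf_le_left hUinv with h | h
    · exact absurd h hUne
    · exact h
  have h2 : W ⊓ m j₀ = m j₀ := by
    rcases hirr j₀ (W ⊓ m j₀) inf_le_right hUinv with h | h
    · exact absurd h hUne
    · exact h
  have hWj₀ : W = m j₀ := h1 ▸ h2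
  -- j₀ = j
  have hVXW : ⁅V, X⁆ ∈ W := ⟨X, hX, rfl⟩
  have hjj : j₀ = j := by
    by_contra hne'
    exact hQXY (horth j₀ j hne' ⁅V, X⁆ (hWj₀ ▸ hVXW) Y hY)
  have hWj : W = m j := hjj ▸ hWj₀
  constructor
  · rw [hW]; exact hWj
  · intro X' hX' k hk Z hZ
    have : ⁅V, X'⁆ ∈ m j := hWj ▸ ⟨X', hX', rfl⟩
    rw [hQsymm]
    exact horth k j hk Z hZ _ this
end

section
/- Assume: (i) T(p,q,k) = 0 whenever p ≤ s and q ≤ s (for every k); (ii) for every q ≤ s, c_q = Σ_{j>s} Σ_{k>s} T(q,j,k); (iii) the scalar curvature is positive: (1/2)·Σ_{i=1}^{ℓ} c_i/x_i − (1/4)·Σ_{i,j,k=1}^{ℓ} T(i,j,k)·x_i/(x_j·x_k) > 0. Then Σ_{j,k,r > s} T(j,k,r)·x_j/(x_k·x_r) < 2·Σ_{j>s} c_j/x_j, and consequently Σ_{j,k,r > s} T(j,k,r)·x_j/(x_k·x_r) ≤ 2·(Σ_{i=1}^{ℓ} c_i) / min_{s < j ≤ ℓ} x_j. -/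
private lemma am_aux (t a b u : ℝ) (ht : 0 ≤ t) (ha : 0 < a) (hb : 0 < b) (hu : 0 < u) :
    2 * (t / u) ≤ t * a / (u * b) + t * b / (u * a) := by
  have key : t * a / (u * b) + t * b / (u * a) - 2 * (t / u)
      = t * (a - b) ^ 2 / (u * a * b) := by
    field_simp
    ring
  nlinarith [div_nonneg (mul_nonneg ht (sq_nonneg (a - b))) (by positivity : (0:ℝ) ≤ u * a * b)]

private lemma pair_bound (B : Finset ℕ) (x : ℕ → ℝ) (g : ℕ → ℕ → ℝ)
    (hg : ∀ i k, 0 ≤ g i k) (hsym : ∀ i k, g i k = g k i)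
    (hx : ∀ i ∈ B, 0 < x i) (u : ℝ) (hu : 0 < u) :
    (∑ i ∈ B, ∑ k ∈ B, g i k) / u ≤ ∑ i ∈ B, ∑ k ∈ B, g i k * x i / (u * x k) := by
  have hswap : ∑ i ∈ B, ∑ k ∈ B, g i k * x i / (u * x k)
      = ∑ i ∈ B, ∑ k ∈ B, g i k * x k / (u * x i) := by
    rw [Finset.sum_comm]
    exact Finset.sum_congr rfl fun i _ => Finset.sum_congr rfl fun k _ => by rw [hsym]
  have h2 : 2 * ((∑ i ∈ B, ∑ k ∈ B, g i k) / u)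
      ≤ 2 * ∑ i ∈ B, ∑ k ∈ B, g i k * x i / (u * x k) := by
    calc 2 * ((∑ i ∈ B, ∑ k ∈ B, g i k) / u)
        = ∑ i ∈ B, ∑ k ∈ B, 2 * (g i k / u) := by
          rw [Finset.sum_div, Finset.mul_sum]
          exact Finset.sum_congr rfl fun i _ => by rw [Finset.sum_div, Finset.mul_sum]
      _ ≤ ∑ i ∈ B, ∑ k ∈ B, (g i k * x i / (u * x k) + g i k * x k / (u * x i)) := by
          refine Finset.sum_le_sum fun i hi => Finset.sum_le_sum fun k hk => ?_
          exact am_aux _ _ _ _ (hg i k) (hx i hi) (hx k hk) hu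
      _ = _ := by
          simp only [Finset.sum_add_distrib]
          rw [two_mul]
          linarith [hswap]
  linarith

/-- the algebraic content of the scalar-curvature estimate bounding
the purely non-toral curvature terms. -/
theorem nontoral_terms_bound
    (ℓ s : ℕ) (hs : 1 ≤ s) (hsl : s < ℓ)
    (x : ℕ → ℝ) (T : ℕ → ℕ → ℕ → ℝ) (c : ℕ → ℝ)
    (hx : ∀ i ∈ Finset.Icc 1 ℓ, 0 < x i)
    (hT : ∀ i j k, 0 ≤ T i j k)
    (hTsymm₁ : ∀ i j k, T i j k = T j i k)
    (hTsymm₂ : ∀ i j k, T i j k = T i k j)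
    (hc : ∀ i, 0 ≤ c i)
    (htoral : ∀ p ∈ Finset.Icc 1 s, ∀ q ∈ Finset.Icc 1 s,
      ∀ k, T p q k = 0)
    (hWZ : ∀ q ∈ Finset.Icc 1 s,
      c q = ∑ j ∈ Finset.Icc (s + 1) ℓ, ∑ k ∈ Finset.Icc (s + 1) ℓ, T q j k)
    (hscal : 0 < (1 / 2) * ∑ i ∈ Finset.Icc 1 ℓ, c i / x i
      - (1 / 4) * ∑ i ∈ Finset.Icc 1 ℓ, ∑ j ∈ Finset.Icc 1 ℓ,
          ∑ k ∈ Finset.Icc 1 ℓ, T i j k * x i / (x j * x k)) :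
    (∑ j ∈ Finset.Icc (s + 1) ℓ, ∑ k ∈ Finset.Icc (s + 1) ℓ,
        ∑ r ∈ Finset.Icc (s + 1) ℓ, T j k r * x j / (x k * x r)
      < 2 * ∑ j ∈ Finset.Icc (s + 1) ℓ, c j / x j) ∧
    ∑ j ∈ Finset.Icc (s + 1) ℓ, ∑ k ∈ Finset.Icc (s + 1) ℓ,
        ∑ r ∈ Finset.Icc (s + 1) ℓ, T j k r * x j / (x k * x r)
      ≤ 2 * (∑ i ∈ Finset.Icc 1 ℓ, c i) /
          (Finset.Icc (s + 1) ℓ).inf' (Finset.nonempty_Icc.mpr hsl) x := by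
  set A := Finset.Icc 1 s with hAdef
  set B := Finset.Icc (s + 1) ℓ with hBdef
  have hBsub : ∀ j ∈ B, j ∈ Finset.Icc 1 ℓ := by
    intro j hj; simp only [hBdef, Finset.mem_Icc] at *; omega
  have hAsub : ∀ j ∈ A, j ∈ Finset.Icc 1 ℓ := by
    intro j hj; simp only [hAdef, Finset.mem_Icc] at *; omega
  have hxB : ∀ j ∈ B, 0 < x j := fun j hj => hx j (hBsub j hj)
  have hxA : ∀ j ∈ A, 0 < x j := fun j hj => hx j (hAsub j hj)
  have hsplit : ∀ f : ℕ → ℝ,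
      ∑ i ∈ Finset.Icc 1 ℓ, f i = ∑ i ∈ A, f i + ∑ i ∈ B, f i := by
    intro f
    rw [show Finset.Icc 1 ℓ = Finset.Ioc 0 ℓ from Finset.Icc_add_one_left_eq_Ioc 0 ℓ,
        show A = Finset.Ioc 0 s from Finset.Icc_add_one_left_eq_Ioc 0 s,
        show B = Finset.Ioc s ℓ from Finset.Icc_add_one_left_eq_Ioc s ℓ]
    exact (Finset.sum_Ioc_consecutive f (Nat.zero_le s) hsl.le).symm
  -- nonnegativity of partial triple sums
  have nn : ∀ s1 s2 s3 : Finset ℕ, (∀ a ∈ s1, a ∈ Finset.Icc 1 ℓ) →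
      (∀ a ∈ s2, a ∈ Finset.Icc 1 ℓ) → (∀ a ∈ s3, a ∈ Finset.Icc 1 ℓ) →
      0 ≤ ∑ i ∈ s1, ∑ j ∈ s2, ∑ k ∈ s3, T i j k * x i / (x j * x k) := by
    intro s1 s2 s3 h1 h2 h3
    refine Finset.sum_nonneg fun i hi => Finset.sum_nonneg fun j hj =>
      Finset.sum_nonneg fun k hk => ?_
    exact div_nonneg (mul_nonneg (hT i j k) (hx i (h1 i hi)).le)
      (mul_pos (hx j (h2 j hj)) (hx k (h3 k hk))).le
  -- Step 1: the full triple sum dominates the three kept pieces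
  have step1 :
      (∑ i ∈ B, ∑ j ∈ A, ∑ k ∈ B, T i j k * x i / (x j * x k))
      + (∑ i ∈ B, ∑ j ∈ B, ∑ k ∈ A, T i j k * x i / (x j * x k))
      + (∑ i ∈ B, ∑ j ∈ B, ∑ k ∈ B, T i j k * x i / (x j * x k))
      ≤ ∑ i ∈ Finset.Icc 1 ℓ, ∑ j ∈ Finset.Icc 1 ℓ,
          ∑ k ∈ Finset.Icc 1 ℓ, T i j k * x i / (x j * x k) := by
    simp only [hsplit, Finset.sum_add_distrib]
    have h1 := nn A A A hAsub hAsub hAsub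
    have h2 := nn A A B hAsub hAsub hBsub
    have h3 := nn A B A hAsub hBsub hAsub
    have h4 := nn A B B hAsub hBsub hBsub
    have h5 := nn B A A hBsub hAsub hAsub
    linarith
  -- Step 2: the two mixed pieces each dominate the toral sum
  have hPj : ∑ q ∈ A, c q / x q
      ≤ ∑ i ∈ B, ∑ j ∈ A, ∑ k ∈ B, T i j k * x i / (x j * x k) := by
    rw [Finset.sum_comm]
    refine Finset.sum_le_sum fun q hq => ?_
    have hb := pair_bound B x (fun i k => T i q k) (fun i k => hT i q k)
      (fun i k => show T i q k = T k q i by rw [hTsymm₁, hTsymm₂, hTsymm₁]) hxB (x q) (hxA q hq)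
    have he : (∑ i ∈ B, ∑ k ∈ B, T i q k) = c q := by
      rw [hWZ q hq]
      exact Finset.sum_congr rfl fun i _ => Finset.sum_congr rfl fun k _ =>
        (hTsymm₁ i q k)
    rw [he] at hb
    exact hb
  have hPk : ∑ q ∈ A, c q / x q
      ≤ ∑ i ∈ B, ∑ j ∈ B, ∑ k ∈ A, T i j k * x i / (x j * x k) := by
    have hre : ∑ i ∈ B, ∑ j ∈ B, ∑ k ∈ A, T i j k * x i / (x j * x k)
        = ∑ q ∈ A, ∑ i ∈ B, ∑ j ∈ B, T i j q * x i / (x q * x j) := by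
      rw [show (∑ i ∈ B, ∑ j ∈ B, ∑ k ∈ A, T i j k * x i / (x j * x k))
          = ∑ i ∈ B, ∑ k ∈ A, ∑ j ∈ B, T i j k * x i / (x j * x k) from
        Finset.sum_congr rfl fun i _ => Finset.sum_comm]
      rw [Finset.sum_comm]
      exact Finset.sum_congr rfl fun q _ => Finset.sum_congr rfl fun i _ =>
        Finset.sum_congr rfl fun j _ => by rw [mul_comm (x j) (x q)]
    rw [hre]
    refine Finset.sum_le_sum fun q hq => ?_
    have hb := pair_bound B x (fun i j => T i j q) (fun i j => hT i j q)
      (fun i j => hTsymm₁ i j q) hxB (x q) (hxA q hq)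
    have he : (∑ i ∈ B, ∑ j ∈ B, T i j q) = c q := by
      rw [hWZ q hq]
      refine Finset.sum_congr rfl fun i _ => Finset.sum_congr rfl fun j _ => ?_
      rw [hTsymm₂ i j q, hTsymm₁ i q j]
    rw [he] at hb
    exact hb
  have hcx : ∑ i ∈ Finset.Icc 1 ℓ, c i / x i
      = ∑ i ∈ A, c i / x i + ∑ i ∈ B, c i / x i := hsplit _
  have main : ∑ j ∈ B, ∑ k ∈ B, ∑ r ∈ B, T j k r * x j / (x k * x r)
      < 2 * ∑ j ∈ B, c j / x j := by linarith
  refine ⟨main, ?_⟩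
  set m := B.inf' (Finset.nonempty_Icc.mpr hsl) x with hmdef
  have hm : 0 < m := by
    rw [hmdef, Finset.lt_inf'_iff]
    exact hxB
  have hmle : ∀ j ∈ B, m ≤ x j := fun j hj => Finset.inf'_le x hj
  have h1 : ∑ j ∈ B, c j / x j ≤ (∑ j ∈ B, c j) / m := by
    rw [Finset.sum_div]
    refine Finset.sum_le_sum fun j hj => ?_
    gcongr
    · exact hc j
    · exact hmle j hj
  have h2 : (∑ j ∈ B, c j) / m ≤ (∑ i ∈ Finset.Icc 1 ℓ, c i) / m := by
    have hss : (∑ j ∈ B, c j) ≤ ∑ i ∈ Finset.Icc 1 ℓ, c i :=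
      Finset.sum_le_sum_of_subset_of_nonneg (fun a ha => hBsub a ha)
        (fun i _ _ => hc i)
    gcongr
  have : 2 * (∑ i ∈ Finset.Icc 1 ℓ, c i) / m = 2 * ((∑ i ∈ Finset.Icc 1 ℓ, c i) / m) := by
    ring
  rw [this]
  linarith
end

section
/- Let a, b, c, d be positive reals with max(b/a, a/b) ≥ max(d/c, c/d). Then (b/a − a/b)·(c/a − d/b) ≥ 0, (b/a − a/b)·(b/d − a/c) ≥ 0, and (b/a − a/b)·(1/(a·c) − 1/(b·d)) ≥ 0. -/
/-- sign lemma for the maximal-ratio index along the flow. -/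
theorem maximal_ratio_sign_lemma
    (a b c d : ℝ) (ha : 0 < a) (hb : 0 < b) (hc : 0 < c) (hd : 0 < d)
    (hmax : max (d / c) (c / d) ≤ max (b / a) (a / b)) :
    0 ≤ (b / a - a / b) * (c / a - d / b) ∧
    0 ≤ (b / a - a / b) * (b / d - a / c) ∧
    0 ≤ (b / a - a / b) * (1 / (a * c) - 1 / (b * d)) := by
  rcases le_total a b with h | h
  · have hm : a / b ≤ b / a := by
      rw [div_le_div_iff₀ hb ha]; nlinarith
    have h1 : d / c ≤ b / a := le_trans (le_max_left _ _) (hmax.trans_eq (max_eq_left hm))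
    have h2 : c / d ≤ b / a := le_trans (le_max_right _ _) (hmax.trans_eq (max_eq_left hm))
    rw [div_le_div_iff₀ hc ha] at h1
    rw [div_le_div_iff₀ hd ha] at h2
    have hf : 0 ≤ b / a - a / b := sub_nonneg.mpr hm
    refine ⟨mul_nonneg hf ?_, mul_nonneg hf ?_, mul_nonneg hf ?_⟩
    · rw [sub_nonneg, div_le_div_iff₀ hb ha]; nlinarith
    · rw [sub_nonneg, div_le_div_iff₀ hc hd]; nlinarith
    · rw [sub_nonneg, div_le_div_iff₀ (by positivity) (by positivity)]; nlinarith
  · have hm : b / a ≤ a / b := by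
      rw [div_le_div_iff₀ ha hb]; nlinarith
    have h1 : d / c ≤ a / b := le_trans (le_max_left _ _) (hmax.trans_eq (max_eq_right hm))
    have h2 : c / d ≤ a / b := le_trans (le_max_right _ _) (hmax.trans_eq (max_eq_right hm))
    rw [div_le_div_iff₀ hc hb] at h1
    rw [div_le_div_iff₀ hd hb] at h2
    have hf : b / a - a / b ≤ 0 := sub_nonpos.mpr hm
    refine ⟨?_, ?_, ?_⟩
    · have hg : c / a - d / b ≤ 0 := by
        rw [sub_nonpos, div_le_div_iff₀ ha hb]; nlinarith
      nlinarith [mul_nonneg (neg_nonneg.2 hf) (neg_nonneg.2 hg)]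
    · have hg : b / d - a / c ≤ 0 := by
        rw [sub_nonpos, div_le_div_iff₀ hd hc]; nlinarith
      nlinarith [mul_nonneg (neg_nonneg.2 hf) (neg_nonneg.2 hg)]
    · have hg : 1 / (a * c) - 1 / (b * d) ≤ 0 := by
        rw [sub_nonpos, div_le_div_iff₀ (by positivity) (by positivity)]; nlinarith
      nlinarith [mul_nonneg (neg_nonneg.2 hf) (neg_nonneg.2 hg)]
end

section
/- Let n ≥ 2 and, in the space of functions Fin n → ℝ with standard basis vectors e_1, …, e_n, define the set of positive roots R⁺ := {e_i − e_j : 1 ≤ i < j ≤ n} ∪ {e_i + e_j : 1 ≤ i < j ≤ n}. Then for all α, β ∈ R⁺, at most one of the three vectors α + β, α − β, β − α belongs to R⁺. -/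
noncomputable section TypeDAux

private def Nrm (n : ℕ) (v : Fin n → ℝ) : ℝ := ∑ k, v k * v k

private def Lin (n : ℕ) (v : Fin n → ℝ) : ℝ := ∑ k, ((n : ℝ) - (k.val : ℝ)) * v k

private lemma Nrm_root {n : ℕ} {i j : Fin n} (hij : i < j) {v : Fin n → ℝ}
    (hv : v = Pi.single i (1 : ℝ) - Pi.single j (1 : ℝ) ∨
          v = Pi.single i (1 : ℝ) + Pi.single j (1 : ℝ)) : Nrm n v = 2 := by
  have hne : i ≠ j := hij.ne
  have key : ∀ k, v k * v k = (if k = i then (1:ℝ) else 0) + (if k = j then (1:ℝ) else 0) := by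
    intro k
    rcases hv with h | h <;> subst h <;>
      simp only [Pi.sub_apply, Pi.add_apply, Pi.single_apply] <;>
      by_cases h1 : k = i <;> by_cases h2 : k = j <;>
        first
        | (exfalso; exact hne (h1 ▸ h2 ▸ rfl))
        | simp [h1, h2, hne, Ne.symm hne]
  rw [Nrm]
  simp only [key]
  rw [Finset.sum_add_distrib, Finset.sum_ite_eq' Finset.univ i, Finset.sum_ite_eq' Finset.univ j]
  norm_num

private lemma Lin_add {n : ℕ} (a b : Fin n → ℝ) : Lin n (a + b) = Lin n a + Lin n b := by
  simp [Lin, ← Finset.sum_add_distrib, mul_add]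

private lemma Lin_sub {n : ℕ} (a b : Fin n → ℝ) : Lin n (a - b) = Lin n a - Lin n b := by
  simp [Lin, ← Finset.sum_sub_distrib, mul_sub]

private lemma Lin_single {n : ℕ} (i : Fin n) :
    Lin n (Pi.single i (1 : ℝ)) = (n : ℝ) - (i.val : ℝ) := by
  simp [Lin, Pi.single_apply, mul_ite, Finset.sum_ite_eq']

private lemma Lin_pos {n : ℕ} {i j : Fin n} (hij : i < j) {v : Fin n → ℝ}
    (hv : v = Pi.single i (1 : ℝ) - Pi.single j (1 : ℝ) ∨
          v = Pi.single i (1 : ℝ) + Pi.single j (1 : ℝ)) : 0 < Lin n v := by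
  have h1 : (i.val : ℝ) < (j.val : ℝ) := by exact_mod_cast hij
  have h2 : (j.val : ℝ) < (n : ℝ) := by exact_mod_cast j.isLt
  rcases hv with h | h <;> subst h
  · rw [Lin_sub, Lin_single, Lin_single]; linarith
  · rw [Lin_add, Lin_single, Lin_single]; linarith

end TypeDAux

/-- for the positive roots of the root system of type D, at most
one of `α + β`, `α - β`, `β - α` is again a positive root. -/
theorem typeD_roots_at_most_one
    (n : ℕ) (hn : 2 ≤ n) :
    ∀ α ∈ {v : Fin n → ℝ | ∃ i j : Fin n, i < j ∧
        (v = Pi.single i (1 : ℝ) - Pi.single j (1 : ℝ) ∨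
         v = Pi.single i (1 : ℝ) + Pi.single j (1 : ℝ))},
    ∀ β ∈ {v : Fin n → ℝ | ∃ i j : Fin n, i < j ∧
        (v = Pi.single i (1 : ℝ) - Pi.single j (1 : ℝ) ∨
         v = Pi.single i (1 : ℝ) + Pi.single j (1 : ℝ))},
      ¬(α + β ∈ {v : Fin n → ℝ | ∃ i j : Fin n, i < j ∧
            (v = Pi.single i (1 : ℝ) - Pi.single j (1 : ℝ) ∨
             v = Pi.single i (1 : ℝ) + Pi.single j (1 : ℝ))} ∧
        α - β ∈ {v : Fin n → ℝ | ∃ i j : Fin n, i < j ∧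
            (v = Pi.single i (1 : ℝ) - Pi.single j (1 : ℝ) ∨
             v = Pi.single i (1 : ℝ) + Pi.single j (1 : ℝ))}) ∧
      ¬(α + β ∈ {v : Fin n → ℝ | ∃ i j : Fin n, i < j ∧
            (v = Pi.single i (1 : ℝ) - Pi.single j (1 : ℝ) ∨
             v = Pi.single i (1 : ℝ) + Pi.single j (1 : ℝ))} ∧
        β - α ∈ {v : Fin n → ℝ | ∃ i j : Fin n, i < j ∧
            (v = Pi.single i (1 : ℝ) - Pi.single j (1 : ℝ) ∨
             v = Pi.single i (1 : ℝ) + Pi.single j (1 : ℝ))}) ∧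
      ¬(α - β ∈ {v : Fin n → ℝ | ∃ i j : Fin n, i < j ∧
            (v = Pi.single i (1 : ℝ) - Pi.single j (1 : ℝ) ∨
             v = Pi.single i (1 : ℝ) + Pi.single j (1 : ℝ))} ∧
        β - α ∈ {v : Fin n → ℝ | ∃ i j : Fin n, i < j ∧
            (v = Pi.single i (1 : ℝ) - Pi.single j (1 : ℝ) ∨
             v = Pi.single i (1 : ℝ) + Pi.single j (1 : ℝ))}) := by
  rintro α ⟨ia, ja, hija, hva⟩ β ⟨ib, jb, hijb, hvb⟩
  have hNα : Nrm n α = 2 := Nrm_root hija hva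
  have hNβ : Nrm n β = 2 := Nrm_root hijb hvb
  have id1 : Nrm n (α + β) + Nrm n (α - β) = 2 * Nrm n α + 2 * Nrm n β := by
    simp only [Nrm, Pi.add_apply, Pi.sub_apply, ← Finset.sum_add_distrib, Finset.mul_sum]
    exact Finset.sum_congr rfl fun k _ => by ring
  have id2 : Nrm n (α + β) + Nrm n (β - α) = 2 * Nrm n α + 2 * Nrm n β := by
    simp only [Nrm, Pi.add_apply, Pi.sub_apply, ← Finset.sum_add_distrib, Finset.mul_sum]
    exact Finset.sum_congr rfl fun k _ => by ring
  refine ⟨?_, ?_, ?_⟩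
  · rintro ⟨⟨i1, j1, h1, hv1⟩, ⟨i2, j2, h2, hv2⟩⟩
    have e1 := Nrm_root h1 hv1
    have e2 := Nrm_root h2 hv2
    linarith
  · rintro ⟨⟨i1, j1, h1, hv1⟩, ⟨i2, j2, h2, hv2⟩⟩
    have e1 := Nrm_root h1 hv1
    have e2 := Nrm_root h2 hv2
    linarith
  · rintro ⟨⟨i1, j1, h1, hv1⟩, ⟨i2, j2, h2, hv2⟩⟩
    have e1 := Lin_pos h1 hv1
    have e2 := Lin_pos h2 hv2
    have : Lin n (α - β) + Lin n (β - α) = 0 := by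
      rw [Lin_sub, Lin_sub]; ring
    linarith
end
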